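/- arXiv:1712.00864 — 2 statements merged into one kernel-verified Lean document; each statement's English description precedes it below -/
import Mathlib

section
/- Let a be a positive integer. Then D(1/a) ≤_S IOE(n ↦ 2^(a^n)) and AED(n ↦ 2^(a^n)) ≤_S B(1/a) (Medvedev reducibilities). -/
open Filter

namespace Paper

/-! ### Oracle computability -/

/-- Codes for oracle Turing functionals (partial recursive operators with one
function oracle), following the pattern of `Nat.Partrec.Code`. -/
inductive OracleCode : Type
  | zero
  | succ
  | left
  | right
  | oracle
  | pair : OracleCode → OracleCode → OracleCode
  | comp : OracleCode → OracleCode → OracleCode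
  | prec : OracleCode → OracleCode → OracleCode
  | rfind' : OracleCode → OracleCode

/-- Evaluation of an oracle code with oracle `g : ℕ → ℕ`. -/
def OracleCode.eval (g : ℕ → ℕ) : OracleCode → ℕ →. ℕ
  | .zero => pure 0
  | .succ => Nat.succ
  | .left => ↑fun n : ℕ => n.unpair.1
  | .right => ↑fun n : ℕ => n.unpair.2
  | .oracle => ↑fun n : ℕ => g n
  | .pair cf cg => fun n => Nat.pair <$> eval g cf n <*> eval g cg n
  | .comp cf cg => fun n => eval g cg n >>= eval g cf
  | .prec cf cg =>
    Nat.unpaired fun a n =>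
      n.rec (eval g cf a) fun y IH => do
        let i ← IH
        eval g cg (Nat.pair a (Nat.pair y i))
  | .rfind' cf =>
    Nat.unpaired fun a m =>
      (Nat.rfind fun n => (fun m => m = 0) <$> eval g cf (Nat.pair a (n + m))).map (· + m)

/-- Turing reducibility: `f ≤_T g` iff some oracle functional with oracle `g`
computes `f` (totally). -/
def TuringLE (f g : ℕ → ℕ) : Prop :=
  ∃ c : OracleCode, ∀ n, OracleCode.eval g c n = Part.some (f n)

/-- Turing equivalence. -/
def TuringEquiv (f g : ℕ → ℕ) : Prop := TuringLE f g ∧ TuringLE g f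

/-- A mass problem is a set of functions `ℕ → ℕ`. -/
abbrev MassProblem := Set (ℕ → ℕ)

/-- Muchnik (weak) reducibility `B ≤_W C`. -/
def MuchnikLE (B C : MassProblem) : Prop := ∀ g ∈ C, ∃ f ∈ B, TuringLE f g

/-- Muchnik equivalence. -/
def MuchnikEquiv (B C : MassProblem) : Prop := MuchnikLE B C ∧ MuchnikLE C B

/-- Medvedev (strong) reducibility `B ≤_S C`: a single Turing functional is
defined on all of `C` and maps each member of `C` to a member of `B`. -/
def MedvedevLE (B C : MassProblem) : Prop :=
  ∃ c : OracleCode, ∀ g ∈ C, ∃ f ∈ B, ∀ n, OracleCode.eval g c n = Part.some (f n)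

/-- Medvedev equivalence. -/
def MedvedevEquiv (B C : MassProblem) : Prop := MedvedevLE B C ∧ MedvedevLE C B

/-! ### Density notions -/

/-- Lower (asymptotic) density of a set of naturals. -/
noncomputable def lowerDensity (z : Set ℕ) : ℝ :=
  Filter.liminf (fun n => (Nat.card ↥(z ∩ Set.Iio n) : ℝ) / n) Filter.atTop

/-- `x ↔ y`: the agreement set of two functions. -/
def agree (x y : ℕ → ℕ) : Set ℕ := {n | x n = y n}

/-- A bit sequence is a `{0,1}`-valued function. -/
def IsBitSeq (x : ℕ → ℕ) : Prop := ∀ n, x n < 2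

/-- The mass problem `D(p)`. -/
def probD (p : ℝ) : MassProblem :=
  {y | IsBitSeq y ∧ ∀ x : ℕ → ℕ, IsBitSeq x → Computable x →
    lowerDensity (agree x y) ≤ p}

/-- The mass problem `B(p)`. -/
def probB (p : ℝ) : MassProblem :=
  {y | IsBitSeq y ∧ ∀ x : ℕ → ℕ, IsBitSeq x → Computable x →
    p < lowerDensity (agree x y)}

/-- The mass problem `IOE(h)`. -/
def IOE (h : ℕ → ℕ) : MassProblem :=
  {f | ∀ x : ℕ → ℕ, Computable x → (∀ n, x n < h n) → ∃ᶠ n in atTop, f n = x n}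

/-- The mass problem `AED(h)`. -/
def AED (h : ℕ → ℕ) : MassProblem :=
  {f | (∀ n, f n < h n) ∧ ∀ x : ℕ → ℕ, Computable x → ∀ᶠ n in atTop, f n ≠ x n}

/-! ### Hamming distance and the problems `D⟨≠*,ĥ,q⟩`, `B⟨≠*,ĥ,q⟩` -/

/-- Normalized Hamming distance between `a` and `b`, viewed as binary strings
of length `r` (via binary expansion with leading zeros). -/
noncomputable def nhd (r a b : ℕ) : ℝ :=
  (((Finset.range r).filter fun i => a.testBit i ≠ b.testBit i).card : ℝ) / r

/-- The mass problem `D⟨≠*, ĥ, q⟩`. -/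
def probDneq (hh : ℕ → ℕ) (q : ℝ) : MassProblem :=
  {y | (∀ n, y n < 2 ^ hh n) ∧ ∀ x : ℕ → ℕ, Computable x → (∀ n, x n < 2 ^ hh n) →
    ∃ᶠ n in atTop, nhd (hh n) (x n) (y n) < q}

/-- The mass problem `B⟨≠*, ĥ, q⟩`. -/
def probBneq (hh : ℕ → ℕ) (q : ℝ) : MassProblem :=
  {y | (∀ n, y n < 2 ^ hh n) ∧ ∀ x : ℕ → ℕ, Computable x → (∀ n, x n < 2 ^ hh n) →
    ∀ᶠ n in atTop, q ≤ nhd (hh n) (x n) (y n)}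

/-! ### Slaloms, coded as functions `ℕ → ℕ` via binary digits -/

/-- `s : ℕ → ℕ`, coding finite sets via binary digits (`i ∈ s(n)` iff the
`i`-th bit of `s n` is set), is an `L`-slalom bounded by `u`. -/
def IsSlalomCode (u : ℕ → ℕ) (L : ℕ) (s : ℕ → ℕ) : Prop :=
  ∀ n, (∀ i, (s n).testBit i = true → i < u n) ∧
    ((Finset.range (u n)).filter fun i => (s n).testBit i = true).card ≤ L

/-- The mass problem `D⟨∌*, u, L⟩`. -/
def probDSlalom (u : ℕ → ℕ) (L : ℕ) : MassProblem :=
  {s | IsSlalomCode u L s ∧ ∀ y : ℕ → ℕ, Computable y → (∀ n, y n < u n) →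
    ∃ᶠ n in atTop, (s n).testBit (y n) = true}

/-- The mass problem `B⟨∌*, u, L⟩`. -/
def probBSlalom (u : ℕ → ℕ) (L : ℕ) : MassProblem :=
  {y | (∀ n, y n < u n) ∧ ∀ s : ℕ → ℕ, Computable s → IsSlalomCode u L s →
    ∀ᶠ n in atTop, (s n).testBit (y n) = false}

/-! ### Gamma and Delta values -/

/-- `γ(A)`. -/
noncomputable def gammaVal (A : ℕ → ℕ) : ℝ :=
  sSup ((fun x => lowerDensity (agree A x)) '' {x | IsBitSeq x ∧ Computable x})

/-- `Γ(A)`. -/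
noncomputable def GammaVal (A : ℕ → ℕ) : ℝ :=
  sInf (gammaVal '' {Y | IsBitSeq Y ∧ TuringEquiv Y A})

/-- `δ(A)`. -/
noncomputable def deltaVal (A : ℕ → ℕ) : ℝ :=
  sInf ((fun x => lowerDensity (agree A x)) '' {x | IsBitSeq x ∧ Computable x})

/-- `Δ(A)`. -/
noncomputable def DeltaVal (A : ℕ → ℕ) : ℝ :=
  sSup (deltaVal '' {Y | IsBitSeq Y ∧ TuringLE Y A})

/-! ### Cardinal characteristics -/

/-- The cardinal characteristic `𝔡(p)`. -/
noncomputable def dChar (p : ℝ) : Cardinal :=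
  sInf {c : Cardinal | ∃ G : Set (ℕ → ℕ), c = Cardinal.mk G ∧ (∀ y ∈ G, IsBitSeq y) ∧
    ∀ x : ℕ → ℕ, IsBitSeq x → ∃ y ∈ G, p < lowerDensity (agree x y)}

/-- The cardinal characteristic `𝔟(p)`. -/
noncomputable def bChar (p : ℝ) : Cardinal :=
  sInf {c : Cardinal | ∃ F : Set (ℕ → ℕ), c = Cardinal.mk F ∧ (∀ x ∈ F, IsBitSeq x) ∧
    ∀ y : ℕ → ℕ, IsBitSeq y → ∃ x ∈ F, lowerDensity (agree x y) ≤ p}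

/-- The cardinal characteristic `𝔡(≠*, h)`. -/
noncomputable def dNeq (h : ℕ → ℕ) : Cardinal :=
  sInf {c : Cardinal | ∃ G : Set (ℕ → ℕ), c = Cardinal.mk G ∧ (∀ y ∈ G, ∀ n, y n < h n) ∧
    ∀ x : ℕ → ℕ, ∃ y ∈ G, ∀ᶠ n in atTop, x n ≠ y n}

/-- The cardinal characteristic `𝔟(≠*, h)`. -/
noncomputable def bNeq (h : ℕ → ℕ) : Cardinal :=
  sInf {c : Cardinal | ∃ F : Set (ℕ → ℕ), c = Cardinal.mk F ∧
    ∀ y : ℕ → ℕ, (∀ n, y n < h n) → ∃ x ∈ F, ∃ᶠ n in atTop, x n = y n}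

/-- The cardinal characteristic `𝔡⟨≠*, ĥ, q⟩`. -/
noncomputable def dHam (hh : ℕ → ℕ) (q : ℝ) : Cardinal :=
  sInf {c : Cardinal | ∃ G : Set (ℕ → ℕ), c = Cardinal.mk G ∧
    (∀ y ∈ G, ∀ n, y n < 2 ^ hh n) ∧
    ∀ x : ℕ → ℕ, (∀ n, x n < 2 ^ hh n) →
      ∃ y ∈ G, ∀ᶠ n in atTop, q ≤ nhd (hh n) (x n) (y n)}

/-- The cardinal characteristic `𝔟⟨≠*, ĥ, q⟩`. -/
noncomputable def bHam (hh : ℕ → ℕ) (q : ℝ) : Cardinal :=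
  sInf {c : Cardinal | ∃ F : Set (ℕ → ℕ), c = Cardinal.mk F ∧
    (∀ x ∈ F, ∀ n, x n < 2 ^ hh n) ∧
    ∀ y : ℕ → ℕ, (∀ n, y n < 2 ^ hh n) →
      ∃ x ∈ F, ∃ᶠ n in atTop, nhd (hh n) (x n) (y n) < q}

/-- `s : ℕ → Finset ℕ` is an `L`-slalom bounded by `u`. -/
def IsSlalom (u : ℕ → ℕ) (L : ℕ) (s : ℕ → Finset ℕ) : Prop :=
  ∀ n, (∀ i ∈ s n, i < u n) ∧ (s n).card ≤ L

/-- The cardinal characteristic `𝔡⟨∌*, u, L⟩`. -/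
noncomputable def dSlalom (u : ℕ → ℕ) (L : ℕ) : Cardinal :=
  sInf {c : Cardinal | ∃ G : Set (ℕ → ℕ), c = Cardinal.mk G ∧ (∀ y ∈ G, ∀ n, y n < u n) ∧
    ∀ s : ℕ → Finset ℕ, IsSlalom u L s → ∃ y ∈ G, ∀ᶠ n in atTop, y n ∉ s n}

/-- The cardinal characteristic `𝔟⟨∌*, u, L⟩`. -/
noncomputable def bSlalom (u : ℕ → ℕ) (L : ℕ) : Cardinal :=
  sInf {c : Cardinal | ∃ F : Set (ℕ → Finset ℕ), c = Cardinal.mk F ∧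
    (∀ s ∈ F, IsSlalom u L s) ∧
    ∀ y : ℕ → ℕ, (∀ n, y n < u n) → ∃ s ∈ F, ∃ᶠ n in atTop, y n ∈ s n}

/-! ### Order functions and list decoding -/

/-- An order function: nondecreasing, unbounded and computable. -/
def IsOrderFunc (F : ℕ → ℕ) : Prop :=
  Computable F ∧ Monotone F ∧ ∀ b : ℕ, ∃ n, b < F n

/-- The list-decoding property for parameters `q`, `ε`, `L`: for every length `r`
there is a set `C` of `2^⌊εr⌋` binary strings of length `r` (coded as numbers
below `2^r`) such that every string has at most `L` elements of `C` within
normalized Hamming distance `< q`. -/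
def ListDecoding (q ε : ℝ) (L : ℕ) : Prop :=
  ∀ r : ℕ, ∃ C : Finset ℕ, (∀ a ∈ C, a < 2 ^ r) ∧ C.card = 2 ^ ⌊ε * r⌋₊ ∧
    ∀ σ < 2 ^ r, (C.filter fun τ => nhd r σ τ < q).card ≤ L


/-! ### Auxiliary machinery for stmt9 -/

section Aux

/-- Embedding of ordinary partial recursive codes into oracle codes. -/
def ofCode : Nat.Partrec.Code → OracleCode
  | .zero => .zero
  | .succ => .succ
  | .left => .left
  | .right => .right
  | .pair cf cg => .pair (ofCode cf) (ofCode cg)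
  | .comp cf cg => .comp (ofCode cf) (ofCode cg)
  | .prec cf cg => .prec (ofCode cf) (ofCode cg)
  | .rfind' cf => .rfind' (ofCode cf)

lemma eval_ofCode (g : ℕ → ℕ) : ∀ c : Nat.Partrec.Code,
    OracleCode.eval g (ofCode c) = c.eval
  | .zero => rfl
  | .succ => rfl
  | .left => rfl
  | .right => rfl
  | .pair cf cg => by
      simp only [ofCode, OracleCode.eval, Nat.Partrec.Code.eval,
        eval_ofCode g cf, eval_ofCode g cg]
      rfl
  | .comp cf cg => by
      simp only [ofCode, OracleCode.eval, Nat.Partrec.Code.eval,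
        eval_ofCode g cf, eval_ofCode g cg]
      rfl
  | .prec cf cg => by
      simp only [ofCode, OracleCode.eval, Nat.Partrec.Code.eval,
        eval_ofCode g cf, eval_ofCode g cg]
      rfl
  | .rfind' cf => by
      simp only [ofCode, OracleCode.eval, Nat.Partrec.Code.eval, eval_ofCode g cf]
      rfl

/-- A total operator on Baire space realized by a single oracle code. -/
def Uniform (T : (ℕ → ℕ) → ℕ → ℕ) : Prop :=
  ∃ c : OracleCode, ∀ g n, OracleCode.eval g c n = Part.some (T g n)

lemma Uniform.of_eq {T T' : (ℕ → ℕ) → ℕ → ℕ} (h : Uniform T)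
    (he : ∀ g n, T g n = T' g n) : Uniform T' := by
  obtain ⟨c, hc⟩ := h
  exact ⟨c, fun g n => by rw [hc, he]⟩

lemma uniform_const {F : ℕ → ℕ} (hF : Computable F) : Uniform fun _ => F := by
  obtain ⟨c, hc⟩ := Nat.Partrec.Code.exists_code.1 (Partrec.nat_iff.1 hF.partrec)
  exact ⟨ofCode c, fun g n => by rw [eval_ofCode, hc]; rfl⟩

lemma uniform_oracle : Uniform fun g => g := ⟨.oracle, fun _ _ => rfl⟩

lemma Uniform.comp {T U : (ℕ → ℕ) → ℕ → ℕ} (hT : Uniform T) (hU : Uniform U) :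
    Uniform fun g n => T g (U g n) := by
  obtain ⟨cT, hcT⟩ := hT; obtain ⟨cU, hcU⟩ := hU
  refine ⟨.comp cT cU, fun g n => ?_⟩
  show OracleCode.eval g cU n >>= OracleCode.eval g cT = _
  rw [hcU]
  exact (Part.bind_some _ _).trans (hcT g _)

lemma Uniform.pair {T U : (ℕ → ℕ) → ℕ → ℕ} (hT : Uniform T) (hU : Uniform U) :
    Uniform fun g n => Nat.pair (T g n) (U g n) := by
  obtain ⟨cT, hcT⟩ := hT; obtain ⟨cU, hcU⟩ := hU
  refine ⟨.pair cT cU, fun g n => ?_⟩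
  show Nat.pair <$> OracleCode.eval g cT n <*> OracleCode.eval g cU n = _
  rw [hcT, hcU]
  simp [Seq.seq]

lemma Uniform.prec {T U : (ℕ → ℕ) → ℕ → ℕ} (hT : Uniform T) (hU : Uniform U) :
    Uniform fun g m => Nat.rec (motive := fun _ => ℕ) (T g m.unpair.1)
      (fun j ih => U g (Nat.pair m.unpair.1 (Nat.pair j ih))) m.unpair.2 := by
  obtain ⟨cT, hcT⟩ := hT; obtain ⟨cU, hcU⟩ := hU
  refine ⟨.prec cT cU, fun g m => ?_⟩
  have key : ∀ A k, (Nat.rec (OracleCode.eval g cT A)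
      (fun y IH => IH.bind fun i => OracleCode.eval g cU (Nat.pair A (Nat.pair y i))) k :
        Part ℕ)
      = Part.some (Nat.rec (motive := fun _ => ℕ) (T g A)
          (fun j ih => U g (Nat.pair A (Nat.pair j ih))) k) := by
    intro A k
    induction k with
    | zero => exact hcT g A
    | succ k ih =>
      show (Nat.rec (OracleCode.eval g cT A)
          (fun y IH => IH.bind fun i => OracleCode.eval g cU (Nat.pair A (Nat.pair y i))) k :
            Part ℕ).bind
          (fun i => OracleCode.eval g cU (Nat.pair A (Nat.pair k i))) = _
      rw [ih, Part.bind_some]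
      exact hcU g _
  exact key m.unpair.1 m.unpair.2

lemma partrec_eval {g : ℕ → ℕ} (hg : Computable g) :
    ∀ c : OracleCode, Nat.Partrec (OracleCode.eval g c)
  | .zero => Nat.Partrec.zero
  | .succ => Nat.Partrec.succ
  | .left => Nat.Partrec.left
  | .right => Nat.Partrec.right
  | .oracle => Partrec.nat_iff.1 hg.partrec
  | .pair cf cg => (partrec_eval hg cf).pair (partrec_eval hg cg)
  | .comp cf cg => (partrec_eval hg cf).comp (partrec_eval hg cg)
  | .prec cf cg => (partrec_eval hg cf).prec (partrec_eval hg cg)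
  | .rfind' cf => (partrec_eval hg cf).rfind'

lemma Uniform.computable {T : (ℕ → ℕ) → ℕ → ℕ} (hT : Uniform T) {g : ℕ → ℕ}
    (hg : Computable g) : Computable (T g) := by
  obtain ⟨c, hc⟩ := hT
  have h := (partrec_eval hg c).of_eq fun n => hc g n
  exact Partrec.nat_iff.2 h

/-! #### Blocks -/

/-- `Sb a n = ∑_{k<n} a^k`, the start of the `n`-th block. -/
def Sb (a : ℕ) : ℕ → ℕ
  | 0 => 0
  | n + 1 => Sb a n + a ^ n

@[simp] lemma Sb_zero (a : ℕ) : Sb a 0 = 0 := rfl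

@[simp] lemma Sb_succ (a : ℕ) (n : ℕ) : Sb a (n + 1) = Sb a n + a ^ n := rfl

/-- The index of the block containing `m`. -/
def blockIdx (a : ℕ) : ℕ → ℕ
  | 0 => 0
  | m + 1 => if Sb a (blockIdx a m + 1) ≤ m + 1 then blockIdx a m + 1 else blockIdx a m

lemma Sb_mono (a : ℕ) : Monotone (Sb a) :=
  monotone_nat_of_le_succ fun n => by simp

lemma Sb_lt_succ {a : ℕ} (ha : 0 < a) (n : ℕ) : Sb a n < Sb a (n + 1) := by
  have : 0 < a ^ n := pow_pos ha n
  simp; omega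

lemma le_Sb {a : ℕ} (ha : 0 < a) (n : ℕ) : n ≤ Sb a n := by
  induction n with
  | zero => simp
  | succ n ih =>
    have : 0 < a ^ n := pow_pos ha n
    simp; omega

lemma Sb_geom {a : ℕ} (ha : 0 < a) (n : ℕ) : (a - 1) * Sb a n + 1 = a ^ n := by
  induction n with
  | zero => simp
  | succ n ih =>
    have h : a - 1 + 1 = a := by omega
    calc (a - 1) * Sb a (n + 1) + 1 = ((a - 1) * Sb a n + 1) + (a - 1) * a ^ n := by
          simp [Nat.mul_add]; ring
      _ = a ^ n + (a - 1) * a ^ n := by rw [ih]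
      _ = (a - 1 + 1) * a ^ n := by ring
      _ = a ^ (n + 1) := by rw [h, pow_succ, Nat.mul_comm]

lemma mul_Sb_le {a : ℕ} (ha : 0 < a) (n : ℕ) : a * Sb a n ≤ Sb a (n + 1) := by
  obtain ⟨b, rfl⟩ : ∃ b, a = b + 1 := ⟨a - 1, by omega⟩
  have hg := Sb_geom ha n
  simp only [Nat.add_sub_cancel] at hg
  have h2 : (b + 1) * Sb (b + 1) n = b * Sb (b + 1) n + Sb (b + 1) n := by ring
  simp only [Sb_succ]
  omega

lemma blockIdx_spec {a : ℕ} (ha : 0 < a) (m : ℕ) :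
    Sb a (blockIdx a m) ≤ m ∧ m < Sb a (blockIdx a m + 1) := by
  induction m with
  | zero =>
    refine ⟨le_refl 0, ?_⟩
    show 0 < Sb a 1
    simp only [Sb_succ, Sb_zero, pow_zero, Nat.zero_add]; omega
  | succ m ih =>
    show Sb a (if _ then _ else _) ≤ m + 1 ∧ m + 1 < Sb a ((if _ then _ else _) + 1)
    split
    · next h => exact ⟨h, lt_of_le_of_lt (by omega) (Sb_lt_succ ha _)⟩
    · next h => exact ⟨le_trans ih.1 (by omega), by omega⟩

lemma blockIdx_eq {a : ℕ} (ha : 0 < a) {n j : ℕ} (hj : j < a ^ n) :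
    blockIdx a (Sb a n + j) = n := by
  set m := Sb a n + j with hm
  obtain ⟨h1, h2⟩ := blockIdx_spec ha m
  have hm1 : Sb a n ≤ m := by omega
  have hm2 : m < Sb a (n + 1) := by simp [hm]; omega
  rcases lt_trichotomy (blockIdx a m) n with h | h | h
  · have : Sb a (blockIdx a m + 1) ≤ Sb a n := Sb_mono a (by omega)
    omega
  · exact h
  · have : Sb a (n + 1) ≤ Sb a (blockIdx a m) := Sb_mono a (by omega)
    omega

/-! #### Digits -/

lemma sum_pow_lt {c : ℕ → ℕ} (hc : ∀ i, c i < 2) (L : ℕ) :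
    (∑ i ∈ Finset.range L, c i * 2 ^ i) < 2 ^ L := by
  induction L with
  | zero => simp
  | succ L ih =>
    rw [Finset.sum_range_succ]
    have h1 : c L ≤ 1 := by have := hc L; omega
    have h2 : c L * 2 ^ L ≤ 2 ^ L := by
      calc c L * 2 ^ L ≤ 1 * 2 ^ L := Nat.mul_le_mul_right _ h1
        _ = 2 ^ L := one_mul _
    have h3 : (2 : ℕ) ^ (L + 1) = 2 ^ L + 2 ^ L := by rw [pow_succ]; ring
    omega

lemma digit_sum {c : ℕ → ℕ} (hc : ∀ i, c i < 2) :
    ∀ L j, j < L → (∑ i ∈ Finset.range L, c i * 2 ^ i) / 2 ^ j % 2 = c j := by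
  intro L
  induction L with
  | zero => omega
  | succ L ih =>
    intro j hj
    rw [Finset.sum_range_succ]
    rcases Nat.lt_or_ge j L with h | h
    · obtain ⟨e, rfl⟩ : ∃ e, L = j + 1 + e := ⟨L - (j + 1), by omega⟩
      have hpow : (2 : ℕ) ^ (j + 1 + e) = 2 ^ j * (2 * 2 ^ e) := by
        rw [pow_add, pow_succ]; ring
      have hre : c (j + 1 + e) * 2 ^ (j + 1 + e) =
          c (j + 1 + e) * (2 * 2 ^ e) * 2 ^ j := by rw [hpow]; ring
      rw [hre, Nat.add_mul_div_right _ _ (pow_pos (by norm_num : (0:ℕ) < 2) j)]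
      have : (∑ i ∈ Finset.range (j + 1 + e), c i * 2 ^ i) / 2 ^ j +
          c (j + 1 + e) * (2 * 2 ^ e) =
          (∑ i ∈ Finset.range (j + 1 + e), c i * 2 ^ i) / 2 ^ j +
          c (j + 1 + e) * 2 ^ e * 2 := by ring
      rw [this, Nat.add_mul_mod_self_right]
      exact ih j h
    · have hjL : j = L := by omega
      subst hjL
      have hS : (∑ i ∈ Finset.range j, c i * 2 ^ i) < 2 ^ j := sum_pow_lt hc j
      rw [Nat.add_mul_div_right _ _ (pow_pos (by norm_num : (0:ℕ) < 2) j),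
        Nat.div_eq_of_lt hS, Nat.zero_add, Nat.mod_eq_of_lt (hc j)]

/-! #### Primitive recursiveness of the block functions -/

lemma primrec_pow_const (a : ℕ) : Primrec fun n : ℕ => a ^ n := by
  have h : Primrec (Nat.rec (motive := fun _ => ℕ) 1 fun _ ih => a * ih) :=
    Primrec.nat_rec₁ 1 ((Primrec.nat_mul.comp (Primrec.const a) Primrec.snd).to₂)
  exact h.of_eq fun n => by
    induction n with
    | zero => simp
    | succ n ih => simp [pow_succ, ih, Nat.mul_comm]

lemma primrec_Sb (a : ℕ) : Primrec (Sb a) := by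
  have h : Primrec (Nat.rec (motive := fun _ => ℕ) 0 fun k ih => ih + a ^ k) :=
    Primrec.nat_rec₁ 0
      ((Primrec.nat_add.comp Primrec.snd ((primrec_pow_const a).comp Primrec.fst)).to₂)
  exact h.of_eq fun n => by
    induction n with
    | zero => rfl
    | succ n ih => simp [ih]

lemma primrec_blockIdx (a : ℕ) : Primrec (blockIdx a) := by
  have h : Primrec (Nat.rec (motive := fun _ => ℕ) 0
      fun m' ih => if Sb a (ih + 1) ≤ m' + 1 then ih + 1 else ih) := by
    have hc : PrimrecPred fun p : ℕ × ℕ => Sb a (p.2 + 1) ≤ p.1 + 1 :=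
      PrimrecRel.comp Primrec.nat_le
        ((primrec_Sb a).comp (Primrec.succ.comp Primrec.snd))
        (Primrec.succ.comp Primrec.fst)
    exact Primrec.nat_rec₁ 0
      ((Primrec.ite hc (Primrec.succ.comp Primrec.snd) Primrec.snd).to₂)
  exact h.of_eq fun m => by
    induction m with
    | zero => rfl
    | succ m ih => simp only [blockIdx, ← ih]

/-! #### The two operators -/

/-- Decoding: the bit of `g`'s value at the block index, at the in-block position. -/
def Tdec (a : ℕ) (g : ℕ → ℕ) (m : ℕ) : ℕ :=
  g (blockIdx a m) / 2 ^ (m - Sb a (blockIdx a m)) % 2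

/-- Encoding: the `G`-image of `g` on the `n`-th block, coded in binary. -/
def Tenc (a : ℕ) (G : ℕ → ℕ) (g : ℕ → ℕ) (n : ℕ) : ℕ :=
  ∑ j ∈ Finset.range (a ^ n), G (g (Sb a n + j)) * 2 ^ j

lemma uniform_Tdec (a : ℕ) : Uniform (Tdec a) := by
  classical
  have hu1 : Primrec fun p : ℕ => p.unpair.1 := Primrec.fst.comp Primrec.unpair
  have hu2 : Primrec fun p : ℕ => p.unpair.2 := Primrec.snd.comp Primrec.unpair
  have hF : Primrec fun p : ℕ =>
      p.unpair.2 / 2 ^ (p.unpair.1 - Sb a (blockIdx a p.unpair.1)) % 2 := by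
    refine Primrec.nat_mod.comp ?_ (Primrec.const 2)
    refine Primrec.nat_div.comp hu2 ?_
    refine (primrec_pow_const 2).comp ?_
    exact Primrec.nat_sub.comp hu1 ((primrec_Sb a).comp ((primrec_blockIdx a).comp hu1))
  have hbi : Uniform fun g m => g (blockIdx a m) :=
    uniform_oracle.comp (uniform_const (primrec_blockIdx a).to_comp)
  have hpair : Uniform fun g m => Nat.pair m (g (blockIdx a m)) :=
    Uniform.pair (uniform_const Computable.id) hbi
  exact ((uniform_const hF.to_comp).comp hpair).of_eq fun g m => by
    simp [Tdec]

lemma uniform_Tenc (a : ℕ) {G : ℕ → ℕ} (hG : Computable G) : Uniform (Tenc a G) := by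
  classical
  have hu1 : Primrec fun p : ℕ => p.unpair.1 := Primrec.fst.comp Primrec.unpair
  have hu2 : Primrec fun p : ℕ => p.unpair.2 := Primrec.snd.comp Primrec.unpair
  -- the step of the recursion: on input `Nat.pair (Nat.pair n (Nat.pair j ih)) v`
  -- (with `v = g (Sb a n + j)`) return `ih + G v * 2^j`.
  have hu : Primrec fun p : ℕ => Sb a p.unpair.1 + p.unpair.2.unpair.1 :=
    Primrec.nat_add.comp ((primrec_Sb a).comp hu1) (hu1.comp hu2)
  have hA : Primrec fun q : ℕ => q.unpair.1.unpair.2.unpair.2 :=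
    hu2.comp (hu2.comp hu1)
  have hB : Primrec fun q : ℕ => q.unpair.1.unpair.2.unpair.1 :=
    hu1.comp (hu2.comp hu1)
  have hF2 : Computable fun q : ℕ =>
      q.unpair.1.unpair.2.unpair.2 + G q.unpair.2 * 2 ^ q.unpair.1.unpair.2.unpair.1 := by
    refine Primrec.nat_add.to_comp.comp hA.to_comp ?_
    exact Primrec.nat_mul.to_comp.comp (hG.comp hu2.to_comp)
      (((primrec_pow_const 2).comp hB).to_comp)
  -- the uniform step operator
  have hstep : Uniform fun g p => p.unpair.2.unpair.2 +
      G (g (Sb a p.unpair.1 + p.unpair.2.unpair.1)) * 2 ^ p.unpair.2.unpair.1 := by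
    have h1 : Uniform fun g p => Nat.pair p (g (Sb a p.unpair.1 + p.unpair.2.unpair.1)) :=
      Uniform.pair (uniform_const Computable.id)
        (uniform_oracle.comp (uniform_const hu.to_comp))
    exact ((uniform_const hF2).comp h1).of_eq fun g p => by simp
  have hbase : Uniform fun (_ : ℕ → ℕ) (_ : ℕ) => 0 :=
    uniform_const (Computable.const 0)
  have hrec := hbase.prec hstep
  have hpairn : Computable fun n : ℕ => Nat.pair n (a ^ n) :=
    (Primrec₂.natPair.comp Primrec.id (primrec_pow_const a)).to_comp
  refine (hrec.comp (uniform_const hpairn)).of_eq fun g n => ?_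
  simp only [Nat.unpair_pair]
  have key : ∀ k, Nat.rec (motive := fun _ => ℕ) 0
      (fun j ih => ih + G (g (Sb a n + j)) * 2 ^ j) k
      = ∑ j ∈ Finset.range k, G (g (Sb a n + j)) * 2 ^ j := by
    intro k
    induction k with
    | zero => simp
    | succ k ih => rw [Finset.sum_range_succ, ← ih]
  exact key (a ^ n)

/-! #### Density estimates -/

lemma lowerDensity_le {z : Set ℕ} {p : ℝ}
    (h : ∃ᶠ N in atTop, (Nat.card ↥(z ∩ Set.Iio N) : ℝ) / N ≤ p) :
    lowerDensity z ≤ p := by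
  refine Filter.liminf_le_of_frequently_le h ?_
  exact Filter.isBoundedUnder_of ⟨0, fun N => by positivity⟩

lemma card_agree_Iio (x y : ℕ → ℕ) (N : ℕ) :
    Nat.card ↥(agree x y ∩ Set.Iio N)
      = ((Finset.range N).filter fun m => x m = y m).card := by
  classical
  have hset : agree x y ∩ Set.Iio N
      = ↑((Finset.range N).filter fun m => x m = y m) := by
    ext m
    simp [agree, Set.mem_inter_iff, and_comm]
  rw [Nat.card_coe_set_eq, hset, Set.ncard_coe_finset]

lemma block_bound {a : ℕ} (ha : 0 < a) {x y : ℕ → ℕ} {n : ℕ}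
    (h : ∀ j < a ^ n, x (Sb a n + j) ≠ y (Sb a n + j)) :
    (Nat.card ↥(agree x y ∩ Set.Iio (Sb a (n + 1))) : ℝ) / (Sb a (n + 1)) ≤ 1 / a := by
  classical
  have hpow : 0 < a ^ n := pow_pos ha n
  set N := Sb a (n + 1) with hN
  have hNval : N = Sb a n + a ^ n := rfl
  set F := (Finset.range N).filter fun m => x m = y m with hF
  have hdisj : Disjoint F (Finset.Ico (Sb a n) (Sb a n + a ^ n)) := by
    rw [Finset.disjoint_left]
    intro m hm hm2
    rw [hF, Finset.mem_filter] at hm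
    rw [Finset.mem_Ico] at hm2
    obtain ⟨j, hj, rfl⟩ : ∃ j, j < a ^ n ∧ m = Sb a n + j :=
      ⟨m - Sb a n, by omega, by omega⟩
    exact h j hj hm.2
  have hsub : F ∪ Finset.Ico (Sb a n) (Sb a n + a ^ n) ⊆ Finset.range N := by
    intro m hm
    rw [Finset.mem_range]
    rcases Finset.mem_union.1 hm with hm | hm
    · exact Finset.mem_range.1 (Finset.mem_of_mem_filter m hm)
    · rw [Finset.mem_Ico] at hm; omega
  have hcount : F.card + a ^ n ≤ N := by
    have h1 := Finset.card_le_card hsub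
    rw [Finset.card_union_of_disjoint hdisj, Nat.card_Ico, Finset.card_range] at h1
    omega
  have hFle : F.card ≤ Sb a n := by omega
  have hNpos : 0 < N := by omega
  rw [card_agree_Iio]
  rw [div_le_div_iff₀ (by exact_mod_cast hNpos) (by exact_mod_cast ha)]
  have hmul : F.card * a ≤ N * 1 := by
    calc F.card * a ≤ Sb a n * a := Nat.mul_le_mul_right _ hFle
      _ = a * Sb a n := Nat.mul_comm _ _
      _ ≤ Sb a (n + 1) := mul_Sb_le ha n
      _ = N * 1 := by omega
  calc (F.card : ℝ) * a ≤ (N : ℝ) * 1 := by exact_mod_cast hmul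
    _ = 1 * N := by ring

end Aux

/-- For a positive integer `a`: `D(1/a) ≤_S IOE(n ↦ 2^(a^n))` and
`AED(n ↦ 2^(a^n)) ≤_S B(1/a)`. -/
theorem stmt9 (a : ℕ) (ha : 0 < a) :
    MedvedevLE (probD (1 / (a : ℝ))) (IOE fun n => 2 ^ a ^ n) ∧
      MedvedevLE (AED fun n => 2 ^ a ^ n) (probB (1 / (a : ℝ))) := by
  classical
  have h1sub : Computable fun t : ℕ => 1 - t :=
    (Primrec.nat_sub.comp (Primrec.const 1) Primrec.id).to_comp
  constructor
  · -- `D(1/a) ≤_S IOE(n ↦ 2^(a^n))`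
    obtain ⟨c, hc⟩ : Uniform fun g m => 1 - Tdec a g m :=
      (uniform_const h1sub).comp (uniform_Tdec a)
    refine ⟨c, fun g hg => ?_⟩
    set y := fun m => 1 - Tdec a g m with hy
    refine ⟨y, ⟨fun m => by show 1 - Tdec a g m < 2; omega, ?_⟩, fun n => hc g n⟩
    intro x hxbit hxcomp
    set x' := Tenc a id x with hx'
    have hx'comp : Computable x' := (uniform_Tenc a Computable.id).computable hxcomp
    have hx'lt : ∀ n, x' n < 2 ^ a ^ n := by
      intro n
      have := sum_pow_lt (c := fun i => x (Sb a n + i)) (fun i => hxbit _) (a ^ n)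
      simpa [hx', Tenc] using this
    have hfreq : ∃ᶠ n in atTop, g n = x' n := hg x' hx'comp hx'lt
    have key : ∀ n, g n = x' n → ∀ j < a ^ n,
        x (Sb a n + j) ≠ y (Sb a n + j) := by
      intro n hgn j hj
      have hbi : blockIdx a (Sb a n + j) = n := blockIdx_eq ha hj
      have hsb : Sb a n + j - Sb a n = j := by omega
      have hdig : x' n / 2 ^ j % 2 = x (Sb a n + j) := by
        have := digit_sum (c := fun i => x (Sb a n + i)) (fun i => hxbit _) (a ^ n) j hj
        simpa [hx', Tenc] using this
      have hy2 : y (Sb a n + j) = 1 - x (Sb a n + j) := by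
        simp [hy, Tdec, hbi, hsb, hgn, hdig]
      have hx2 := hxbit (Sb a n + j)
      rw [hy2]
      omega
    refine lowerDensity_le ?_
    rw [Filter.frequently_atTop] at hfreq ⊢
    intro M
    obtain ⟨n, hn, hgn⟩ := hfreq M
    refine ⟨Sb a (n + 1), ?_, block_bound ha (key n hgn)⟩
    calc M ≤ n := hn
      _ ≤ Sb a n := le_Sb ha n
      _ ≤ Sb a (n + 1) := Sb_mono a (by omega)
  · -- `AED(n ↦ 2^(a^n)) ≤_S B(1/a)`
    obtain ⟨c, hc⟩ : Uniform (Tenc a fun t => 1 - t) := uniform_Tenc a h1sub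
    refine ⟨c, fun y hy => ?_⟩
    obtain ⟨hybit, hyB⟩ := hy
    set f := Tenc a (fun t => 1 - t) y with hf
    refine ⟨f, ⟨?_, ?_⟩, fun n => hc y n⟩
    · intro n
      have := sum_pow_lt (c := fun i => 1 - y (Sb a n + i)) (fun i => by show 1 - y (Sb a n + i) < 2; omega) (a ^ n)
      simpa [hf, Tenc] using this
    · intro x hxcomp
      by_contra hev
      have hfreq : ∃ᶠ n in atTop, ¬f n ≠ x n := Filter.not_eventually.1 hev
      simp only [not_not] at hfreq
      set xh := Tdec a x with hxh
      have hxhcomp : Computable xh := (uniform_Tdec a).computable hxcomp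
      have hxhbit : IsBitSeq xh := fun m => Nat.mod_lt _ (by norm_num)
      have hlt : 1 / (a : ℝ) < lowerDensity (agree xh y) := hyB xh hxhbit hxhcomp
      have hle : lowerDensity (agree xh y) ≤ 1 / (a : ℝ) := by
        refine lowerDensity_le ?_
        rw [Filter.frequently_atTop] at hfreq ⊢
        intro M
        obtain ⟨n, hn, hfn⟩ := hfreq M
        have key : ∀ j < a ^ n, xh (Sb a n + j) ≠ y (Sb a n + j) := by
          intro j hj
          have hbi : blockIdx a (Sb a n + j) = n := blockIdx_eq ha hj
          have hsb : Sb a n + j - Sb a n = j := by omega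
          have hdig : f n / 2 ^ j % 2 = 1 - y (Sb a n + j) := by
            have := digit_sum (c := fun i => 1 - y (Sb a n + i))
              (fun i => by show 1 - y (Sb a n + i) < 2; omega) (a ^ n) j hj
            simpa [hf, Tenc] using this
          have hxv : xh (Sb a n + j) = 1 - y (Sb a n + j) := by
            rw [hxh]
            show x (blockIdx a (Sb a n + j)) /
              2 ^ (Sb a n + j - Sb a (blockIdx a (Sb a n + j))) % 2 = _
            rw [hbi, hsb, ← hfn, hdig]
          have hy2 := hybit (Sb a n + j)
          rw [hxv]
          omega
        refine ⟨Sb a (n + 1), ?_, block_bound ha key⟩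
        calc M ≤ n := hn
          _ ≤ Sb a n := le_Sb ha n
          _ ≤ Sb a (n + 1) := Sb_mono a (by omega)
      linarith

end Paper
end

section
/- Let L ∈ ℕ, let u: ℕ→ℕ be a computable nondecreasing function, and let w(n) = u(2n). Then D⟨∌*, u, L⟩ ≡_W D⟨∌*, w, L⟩ (Muchnik equivalence) and B⟨∌*, u, L⟩ ≡_S B⟨∌*, w, L⟩ (Medvedev equivalence). -/
open Filter

namespace Paper

/-! ### Auxiliary machinery for `stmt12` -/

/-- Embedding of plain partial recursive codes into oracle codes. -/
def toOracle : Nat.Partrec.Code → OracleCode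
  | .zero => .zero
  | .succ => .succ
  | .left => .left
  | .right => .right
  | .pair cf cg => .pair (toOracle cf) (toOracle cg)
  | .comp cf cg => .comp (toOracle cf) (toOracle cg)
  | .prec cf cg => .prec (toOracle cf) (toOracle cg)
  | .rfind' cf => .rfind' (toOracle cf)

lemma eval_toOracle (g : ℕ → ℕ) (c : Nat.Partrec.Code) :
    OracleCode.eval g (toOracle c) = c.eval := by
  induction c <;> simp [toOracle, OracleCode.eval, Nat.Partrec.Code.eval, *] <;> rfl

lemma exists_oracleCode {h : ℕ → ℕ} (hh : Computable h) :
    ∃ c : OracleCode, ∀ (g : ℕ → ℕ) n, OracleCode.eval g c n = Part.some (h n) := by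
  obtain ⟨c, hc⟩ := Nat.Partrec.Code.exists_code.1 (Partrec.nat_iff.1 hh)
  exact ⟨toOracle c, fun g n => by rw [eval_toOracle, hc]; rfl⟩

/-- Master lemma: any function of the form `n ↦ F (⟨n, g (k n)⟩)` with `F`, `k`
computable is uniformly oracle-computable from `g`. -/
lemma master (F k : ℕ → ℕ) (hF : Computable F) (hk : Computable k) :
    ∃ c : OracleCode, ∀ (g : ℕ → ℕ) n,
      OracleCode.eval g c n = Part.some (F (Nat.pair n (g (k n)))) := by
  obtain ⟨cF, hcF⟩ := exists_oracleCode hF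
  obtain ⟨ck, hck⟩ := exists_oracleCode hk
  refine ⟨.comp cF (.pair (.pair .left .right) (.comp .oracle ck)), fun g n => ?_⟩
  simp [OracleCode.eval, hck, hcF, Seq.seq, Part.bind_some]
  exact (congrArg (· >>= OracleCode.eval g cF) (congrArg (Part.map (Nat.pair n)) (Part.bind_some (k n) (fun n => Part.some (g n))))).trans (by rw [Part.map_some]; exact (Part.bind_some _ _).trans (hcF g _))

lemma pr_two_pow : Primrec (fun n : ℕ => 2 ^ n) := by
  have h : Primrec₂ ((· ^ ·) : ℕ → ℕ → ℕ) := Primrec₂.unpaired'.1 Nat.Primrec.pow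
  exact h.comp (Primrec.const 2) Primrec.id

lemma pr_double : Primrec (fun n : ℕ => 2 * n) :=
  Primrec.nat_mul.comp (Primrec.const 2) Primrec.id

lemma pr_half : Primrec (fun n : ℕ => n / 2) :=
  Primrec.nat_div.comp Primrec.id (Primrec.const 2)

lemma pr_up1 : Primrec (fun p : ℕ => p.unpair.1) := Primrec.fst.comp Primrec.unpair

lemma pr_up2 : Primrec (fun p : ℕ => p.unpair.2) := Primrec.snd.comp Primrec.unpair

/-- Even part of a slalom bounded by `u` is a slalom bounded by `n ↦ u (2n)`. -/
lemma slalom_even {u : ℕ → ℕ} {L : ℕ} {s : ℕ → ℕ} (hs : IsSlalomCode u L s) :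
    IsSlalomCode (fun n => u (2 * n)) L (fun n => s (2 * n)) :=
  fun n => hs (2 * n)

/-- Truncated odd part of a slalom bounded by `u` is bounded by `n ↦ u (2n)`. -/
lemma slalom_odd {u : ℕ → ℕ} {L : ℕ} {s : ℕ → ℕ} (hs : IsSlalomCode u L s) :
    IsSlalomCode (fun n => u (2 * n)) L (fun n => s (2 * n + 1) % 2 ^ u (2 * n)) := by
  intro n
  constructor
  · intro i hi
    rw [Nat.testBit_mod_two_pow, Bool.and_eq_true, decide_eq_true_eq] at hi
    exact hi.1
  · refine le_trans (Finset.card_le_card ?_) (hs (2 * n + 1)).2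
    intro i hi
    simp only [Finset.mem_filter, Finset.mem_range, Nat.testBit_mod_two_pow,
      Bool.and_eq_true, decide_eq_true_eq] at hi ⊢
    exact ⟨(hs (2 * n + 1)).1 i hi.2.2, hi.2.2⟩

/-- Spreading a slalom bounded by `n ↦ u (2n)` over the even positions. -/
lemma slalom_spread {u : ℕ → ℕ} {L : ℕ} {t : ℕ → ℕ}
    (ht : IsSlalomCode (fun n => u (2 * n)) L t) :
    IsSlalomCode u L (fun m => (1 - m % 2) * t (m / 2)) := by
  intro m
  beta_reduce
  rcases Nat.mod_two_eq_zero_or_one m with h | h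
  · have hm2 : 2 * (m / 2) = m := by omega
    have hval : (1 - m % 2) * t (m / 2) = t (m / 2) := by rw [h]; ring
    rw [hval]
    refine ⟨fun i hi => ?_, ?_⟩
    · have := (ht (m / 2)).1 i hi
      simpa [hm2] using this
    · have := (ht (m / 2)).2
      simpa [hm2] using this
  · have hval : (1 - m % 2) * t (m / 2) = 0 := by rw [h]; ring
    rw [hval]
    simp [Nat.zero_testBit]


/-- For `L ∈ ℕ`, computable nondecreasing `u`, and `w(n) = u(2n)`:
`D⟨∌*, u, L⟩ ≡_W D⟨∌*, w, L⟩` and `B⟨∌*, u, L⟩ ≡_S B⟨∌*, w, L⟩`. -/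
theorem stmt12 (L : ℕ) (u : ℕ → ℕ) (hu : Computable u) (hm : Monotone u) :
    MuchnikEquiv (probDSlalom u L) (probDSlalom (fun n => u (2 * n)) L) ∧
      MedvedevEquiv (probBSlalom u L) (probBSlalom (fun n => u (2 * n)) L) := by
  have c2 : Computable fun n : ℕ => 2 * n := pr_double.to_comp
  have chalf : Computable fun n : ℕ => n / 2 := pr_half.to_comp
  have codd : Computable fun n : ℕ => 2 * n + 1 := (Primrec.succ.comp pr_double).to_comp
  have hmod2 : Primrec fun m : ℕ => m % 2 := Primrec.nat_mod.comp Primrec.id (Primrec.const 2)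
  have h1m : Primrec fun m : ℕ => 1 - m % 2 := Primrec.nat_sub.comp (Primrec.const 1) hmod2
  have cpow : Computable fun n : ℕ => 2 ^ u (2 * n) := pr_two_pow.to_comp.comp (hu.comp c2)
  refine ⟨⟨?_, ?_⟩, ?_, ?_⟩
  · -- MuchnikLE (D u) (D w)
    intro t ht
    refine ⟨fun m => (1 - m % 2) * t (m / 2), ⟨slalom_spread ht.1, ?_⟩, ?_⟩
    · intro y hy hyu
      have hfreq := ht.2 (fun n => y (2 * n)) (hy.comp c2) (fun n => hyu (2 * n))
      rw [Filter.frequently_atTop] at hfreq ⊢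
      intro a
      obtain ⟨n, hna, hn⟩ := hfreq a
      refine ⟨2 * n, by omega, ?_⟩
      have e1 : (2 * n) % 2 = 0 := by omega
      have e2 : (2 * n) / 2 = n := by omega
      show ((1 - (2 * n) % 2) * t ((2 * n) / 2)).testBit (y (2 * n)) = true
      rw [e1, e2]
      simpa using hn
    · obtain ⟨c, hc⟩ := master (fun p => (1 - p.unpair.1 % 2) * p.unpair.2) (fun m => m / 2)
        ((Primrec.nat_mul.comp (Primrec.nat_sub.comp (Primrec.const 1)
          (Primrec.nat_mod.comp pr_up1 (Primrec.const 2))) pr_up2).to_comp) chalf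
      exact ⟨c, fun n => by rw [hc]; simp⟩
  · -- MuchnikLE (D w) (D u)
    intro s hs
    by_cases hA : ∀ y : ℕ → ℕ, Computable y → (∀ n, y n < u (2 * n)) →
        ∃ᶠ n in atTop, (s (2 * n)).testBit (y n) = true
    · refine ⟨fun n => s (2 * n), ⟨slalom_even hs.1, hA⟩, ?_⟩
      obtain ⟨c, hc⟩ := master (fun p => p.unpair.2) (fun n => 2 * n) pr_up2.to_comp c2
      exact ⟨c, fun n => by rw [hc]; simp⟩
    · push_neg at hA
      obtain ⟨y₀, hy₀c, hy₀b, hy₀⟩ := hA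
      refine ⟨fun n => s (2 * n + 1) % 2 ^ u (2 * n), ⟨slalom_odd hs.1, ?_⟩, ?_⟩
      · intro y hy hyb
        set y' : ℕ → ℕ := fun m => (m % 2) * y (m / 2) + (1 - m % 2) * y₀ (m / 2) with hy'def
        have hy'even : ∀ n, y' (2 * n) = y₀ n := by
          intro n
          have e1 : (2 * n) % 2 = 0 := by omega
          have e2 : (2 * n) / 2 = n := by omega
          simp [hy'def, e1, e2]
        have hy'odd : ∀ n, y' (2 * n + 1) = y n := by
          intro n
          have e1 : (2 * n + 1) % 2 = 1 := by omega
          have e2 : (2 * n + 1) / 2 = n := by omega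
          simp [hy'def, e1, e2]
        have hy'c : Computable y' :=
          Computable₂.comp (Primrec₂.to_comp Primrec.nat_add)
            (Computable₂.comp (Primrec₂.to_comp Primrec.nat_mul) hmod2.to_comp (hy.comp chalf))
            (Computable₂.comp (Primrec₂.to_comp Primrec.nat_mul) h1m.to_comp (hy₀c.comp chalf))
        have hy'b : ∀ m, y' m < u m := by
          intro m
          rcases Nat.mod_two_eq_zero_or_one m with hpar | hpar
          · obtain ⟨n, rfl⟩ : ∃ n, m = 2 * n := ⟨m / 2, by omega⟩
            rw [hy'even]
            exact hy₀b n
          · obtain ⟨n, rfl⟩ : ∃ n, m = 2 * n + 1 := ⟨m / 2, by omega⟩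
            rw [hy'odd]
            exact lt_of_lt_of_le (hyb n) (hm (by omega))
        have hfreq := hs.2 y' hy'c hy'b
        rw [Filter.eventually_atTop] at hy₀
        obtain ⟨N, hN⟩ := hy₀
        rw [Filter.frequently_atTop] at hfreq ⊢
        intro a
        obtain ⟨m, hma, hmm⟩ := hfreq (2 * a + 2 * N + 2)
        rcases Nat.mod_two_eq_zero_or_one m with hpar | hpar
        · exfalso
          obtain ⟨n, rfl⟩ : ∃ n, m = 2 * n := ⟨m / 2, by omega⟩
          rw [hy'even] at hmm
          exact hN n (by omega) hmm
        · obtain ⟨n, rfl⟩ : ∃ n, m = 2 * n + 1 := ⟨m / 2, by omega⟩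
          rw [hy'odd] at hmm
          refine ⟨n, by omega, ?_⟩
          show (s (2 * n + 1) % 2 ^ u (2 * n)).testBit (y n) = true
          rw [Nat.testBit_mod_two_pow]
          have hlt : y n < u (2 * n) := hyb n
          simp [hmm, hlt]
      · obtain ⟨c, hc⟩ := master (fun p => p.unpair.2 % 2 ^ u (2 * p.unpair.1))
          (fun n => 2 * n + 1)
          (Computable₂.comp (Primrec₂.to_comp Primrec.nat_mod) pr_up2.to_comp
            (pr_two_pow.to_comp.comp (hu.comp (pr_double.comp pr_up1).to_comp))) codd
        exact ⟨c, fun n => by rw [hc]; simp⟩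
  · -- MedvedevLE (B u) (B w)
    obtain ⟨c, hc⟩ := master (fun p => p.unpair.2) (fun m => m / 2) pr_up2.to_comp chalf
    refine ⟨c, fun g hg => ⟨fun m => g (m / 2), ⟨?_, ?_⟩, fun n => by rw [hc]; simp⟩⟩
    · intro n
      show g (n / 2) < u n
      exact lt_of_lt_of_le (hg.1 (n / 2)) (hm (by omega))
    · intro s hsC hsSl
      have h1 := hg.2 (fun n => s (2 * n)) (hsC.comp c2) (slalom_even hsSl)
      have h2 := hg.2 (fun n => s (2 * n + 1) % 2 ^ u (2 * n))
        (Computable₂.comp (Primrec₂.to_comp Primrec.nat_mod) (hsC.comp codd) cpow)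
        (slalom_odd hsSl)
      rw [Filter.eventually_atTop] at h1 h2 ⊢
      obtain ⟨N1, hN1⟩ := h1
      obtain ⟨N2, hN2⟩ := h2
      refine ⟨2 * N1 + 2 * N2 + 2, fun m hmge => ?_⟩
      rcases Nat.mod_two_eq_zero_or_one m with hpar | hpar
      · obtain ⟨n, rfl⟩ : ∃ n, m = 2 * n := ⟨m / 2, by omega⟩
        have e2 : (2 * n) / 2 = n := by omega
        show (s (2 * n)).testBit (g ((2 * n) / 2)) = false
        rw [e2]
        exact hN1 n (by omega)
      · obtain ⟨n, rfl⟩ : ∃ n, m = 2 * n + 1 := ⟨m / 2, by omega⟩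
        have e2 : (2 * n + 1) / 2 = n := by omega
        show (s (2 * n + 1)).testBit (g ((2 * n + 1) / 2)) = false
        rw [e2]
        have h3 := hN2 n (by omega)
        rw [Nat.testBit_mod_two_pow] at h3
        have hlt : g n < u (2 * n) := hg.1 n
        simpa [hlt] using h3
  · -- MedvedevLE (B w) (B u)
    obtain ⟨c, hc⟩ := master (fun p => p.unpair.2) (fun n => 2 * n) pr_up2.to_comp c2
    refine ⟨c, fun g hg => ⟨fun n => g (2 * n), ⟨fun n => hg.1 (2 * n), ?_⟩,
      fun n => by rw [hc]; simp⟩⟩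
    intro t htC htSl
    have hstream := hg.2 (fun m => (1 - m % 2) * t (m / 2))
      (Computable₂.comp (Primrec₂.to_comp Primrec.nat_mul) h1m.to_comp (htC.comp chalf))
      (slalom_spread htSl)
    rw [Filter.eventually_atTop] at hstream ⊢
    obtain ⟨N, hN⟩ := hstream
    refine ⟨N, fun n hn => ?_⟩
    have h3 := hN (2 * n) (by omega)
    have e1 : (2 * n) % 2 = 0 := by omega
    have e2 : (2 * n) / 2 = n := by omega
    beta_reduce at h3
    rw [e1, e2] at h3
    show (t n).testBit (g (2 * n)) = false
    simpa using h3


end Paper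
end
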